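/- (de Bruijn's lemma on translated polynomials) Let p be a polynomial with real coefficients all of whose zeros lie in the closed strip {z : |Im z| ≤ δ}, and let λ > 0. Set μ = √(max(δ² − λ², 0)). Then |p(z + iλ)| > |p(z − iλ)| for all z with Im z > μ. -/

import Mathlib

open Complex Polynomial

private lemma deBruijn_key (l δ : ℝ) (hl : 0 < l) (z : ℂ) (hy : 0 < z.im)
    (h2 : δ ^ 2 - l ^ 2 < z.im ^ 2) :
    ∀ n (p : Polynomial ℝ), p.natDegree ≤ n → p ≠ 0 →
      (∀ w : ℂ, Polynomial.aeval w p = 0 → |w.im| ≤ δ) →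
      ‖Polynomial.aeval (z - I * l) p‖ ≤
        ‖Polynomial.aeval (z + I * l) p‖ ∧
      (p.natDegree ≠ 0 →
        ‖Polynomial.aeval (z - I * l) p‖ <
          ‖Polynomial.aeval (z + I * l) p‖) := by
  intro n
  induction n with
  | zero =>
    intro p hd hp0 _
    have h0 : p.natDegree = 0 := Nat.le_zero.mp hd
    obtain ⟨c, rfl⟩ : ∃ c, p = C c := ⟨p.coeff 0, p.eq_C_of_natDegree_eq_zero h0⟩
    simp
  | succ n ih =>
    intro p hd hp0 hroots
    by_cases h0 : p.natDegree = 0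
    · obtain ⟨c, rfl⟩ : ∃ c, p = C c := ⟨p.coeff 0, p.eq_C_of_natDegree_eq_zero h0⟩
      simp
    -- there is a complex root
    have hmapne : p.map (algebraMap ℝ ℂ) ≠ 0 := by
      simpa using (Polynomial.map_ne_zero_iff (algebraMap ℝ ℂ).injective).mpr hp0
    have hdegmap : (p.map (algebraMap ℝ ℂ)).degree ≠ 0 := by
      rw [Polynomial.degree_map_eq_of_injective (algebraMap ℝ ℂ).injective]
      intro h
      exact h0 (Polynomial.natDegree_eq_zero_iff_degree_le_zero.mpr h.le)
    obtain ⟨r, hr⟩ := IsAlgClosed.exists_root _ hdegmap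
    have hr' : Polynomial.aeval r p = 0 := by
      rw [Polynomial.aeval_def, Polynomial.eval₂_eq_eval_map]; exact hr
    -- positivity of the "+" side for any real poly with roots in the strip
    have hposplus : ∀ q : Polynomial ℝ,
        (∀ w : ℂ, Polynomial.aeval w q = 0 → |w.im| ≤ δ) →
        Polynomial.aeval (z + I * l) q ≠ 0 := by
      intro q hq habs
      have := hq _ habs
      have him : (z + I * (l : ℂ)).im = z.im + l := by simp
      rw [him] at this
      have h1 : z.im + l ≤ δ := le_of_abs_le (by simpa using this)
      nlinarith [abs_nonneg (z.im + l)]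
    by_cases him : r.im = 0
    · -- real root case: factor out (X - C r.re)
      have hre : Polynomial.aeval ((r.re : ℝ) : ℂ) p = 0 := by
        have : ((r.re : ℝ) : ℂ) = r := Complex.ext rfl him.symm
        rw [this]; exact hr'
      have hroot : p.IsRoot r.re := by
        have h := Polynomial.aeval_algebraMap_apply_eq_algebraMap_eval (R := ℝ) (A := ℂ) r.re p
        have h2 : algebraMap ℝ ℂ (p.eval r.re) = 0 := by
          rw [← h]; simpa using hre
        exact (map_eq_zero_iff _ (algebraMap ℝ ℂ).injective).mp h2
      obtain ⟨q, hq⟩ := (Polynomial.dvd_iff_isRoot).mpr hroot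
      have hqne : q ≠ 0 := by rintro rfl; simp at hq; exact hp0 hq
      have hdq : q.natDegree ≤ n := by
        have := Polynomial.natDegree_mul (Polynomial.X_sub_C_ne_zero r.re) hqne
        rw [← hq] at this
        simp [Polynomial.natDegree_X_sub_C] at this
        omega
      have hqr : ∀ w : ℂ, Polynomial.aeval w q = 0 → |w.im| ≤ δ := by
        intro w hw
        apply hroots
        rw [hq, map_mul, hw, mul_zero]
      obtain ⟨hle, -⟩ := ih q hdq hqne hqr
      have hqpos : 0 < ‖Polynomial.aeval (z + I * l) q‖ :=
        (norm_pos_iff).mpr (hposplus q hqr)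
      -- strict inequality for the linear factor
      have hlin : ‖Polynomial.aeval (z - I * l) (X - C r.re)‖ <
          ‖Polynomial.aeval (z + I * l) (X - C r.re)‖ := by
        have e1 : Polynomial.aeval (z - I * l) (X - C r.re) = z - I * l - r.re := by
          simp
        have e2 : Polynomial.aeval (z + I * l) (X - C r.re) = z + I * l - r.re := by
          simp
        rw [e1, e2, Complex.norm_def, Complex.norm_def]
        apply Real.sqrt_lt_sqrt (Complex.normSq_nonneg _)
        simp only [Complex.normSq_apply, Complex.sub_re, Complex.sub_im, Complex.add_re,
          Complex.add_im, Complex.mul_re, Complex.mul_im, Complex.I_re, Complex.I_im,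
          Complex.ofReal_re, Complex.ofReal_im]
        nlinarith [mul_pos hy hl]
      constructor
      · rw [hq]
        simp only [map_mul, norm_mul]
        exact mul_le_mul hlin.le hle (norm_nonneg _) (norm_nonneg _)
      · intro _
        rw [hq]
        simp only [map_mul, norm_mul]
        nlinarith [hlin, hle, hqpos, norm_nonneg (Polynomial.aeval (z - I * (l:ℂ)) (X - C r.re)),
          norm_nonneg (Polynomial.aeval (z - I * (l:ℂ)) q)]
    · -- complex root case: factor out the quadratic
      set f : Polynomial ℝ := X ^ 2 - C (2 * r.re) * X + C (r.re ^ 2 + r.im ^ 2) with hf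
      have hbound : |r.im| ≤ δ := hroots r hr'
      have hmapf : f.map (algebraMap ℝ ℂ) =
          (X - C r) * (X - C ((starRingEnd ℂ) r)) := by
        have h1 : r + (starRingEnd ℂ) r = ((2 * r.re : ℝ) : ℂ) := by
          exact_mod_cast Complex.add_conj r
        have h2 : r * (starRingEnd ℂ) r = ((r.re ^ 2 + r.im ^ 2 : ℝ) : ℂ) := by
          rw [Complex.mul_conj, Complex.normSq_apply]
          push_cast
          ring
        rw [hf]
        simp only [Polynomial.map_add, Polynomial.map_sub, Polynomial.map_pow,
          Polynomial.map_mul, Polynomial.map_X, Polynomial.map_C]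
        rw [show (algebraMap ℝ ℂ) (2 * r.re) = r + (starRingEnd ℂ) r from h1.symm,
          show (algebraMap ℝ ℂ) (r.re ^ 2 + r.im ^ 2) = r * (starRingEnd ℂ) r from h2.symm,
          Polynomial.C_add, Polynomial.C_mul]
        ring
      have hconjroot : Polynomial.aeval ((starRingEnd ℂ) r) p = 0 := by
        rw [Polynomial.aeval_conj, hr', map_zero]
      have hdvd : f ∣ p := by
        rw [← Polynomial.map_dvd_map' (algebraMap ℝ ℂ), hmapf]
        apply IsCoprime.mul_dvd
        · apply Polynomial.isCoprime_X_sub_C_of_isUnit_sub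
          have hne : r ≠ (starRingEnd ℂ) r := by
            intro h
            exact him (Complex.conj_eq_iff_im.mp h.symm)
          exact (sub_ne_zero.mpr hne).isUnit
        · rw [Polynomial.dvd_iff_isRoot]
          rw [Polynomial.IsRoot, ← Polynomial.eval₂_eq_eval_map, ← Polynomial.aeval_def]
          exact hr'
        · rw [Polynomial.dvd_iff_isRoot]
          rw [Polynomial.IsRoot, ← Polynomial.eval₂_eq_eval_map, ← Polynomial.aeval_def]
          exact hconjroot
      obtain ⟨q, hq⟩ := hdvd
      have hfne : f ≠ 0 := by
        intro h
        have := congrArg (Polynomial.map (algebraMap ℝ ℂ)) h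
        rw [hmapf] at this
        simp at this
        rcases this with h' | h' <;> exact Polynomial.X_sub_C_ne_zero _ h'
      have hqne : q ≠ 0 := by rintro rfl; simp at hq; exact hp0 hq
      have hfdeg : f.natDegree = 2 := by
        have : (f.map (algebraMap ℝ ℂ)).natDegree = 2 := by
          rw [hmapf, Polynomial.natDegree_mul (Polynomial.X_sub_C_ne_zero _)
            (Polynomial.X_sub_C_ne_zero _), Polynomial.natDegree_X_sub_C,
            Polynomial.natDegree_X_sub_C]
        rwa [Polynomial.natDegree_map_eq_of_injective (algebraMap ℝ ℂ).injective] at this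
      have hdq : q.natDegree ≤ n := by
        have := Polynomial.natDegree_mul hfne hqne
        rw [← hq, hfdeg] at this
        omega
      have hqr : ∀ w : ℂ, Polynomial.aeval w q = 0 → |w.im| ≤ δ := by
        intro w hw
        apply hroots
        rw [hq, map_mul, hw, mul_zero]
      obtain ⟨hle, -⟩ := ih q hdq hqne hqr
      have hqpos : 0 < ‖Polynomial.aeval (z + I * l) q‖ :=
        (norm_pos_iff).mpr (hposplus q hqr)
      have haevf : ∀ w : ℂ, Polynomial.aeval w f =
          (w - r) * (w - (starRingEnd ℂ) r) := by
        intro w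
        rw [Polynomial.aeval_def, Polynomial.eval₂_eq_eval_map, hmapf]
        simp
      have hb2 : r.im ^ 2 ≤ δ ^ 2 := by
        nlinarith [abs_nonneg r.im, _root_.sq_abs r.im]
      have hquad : ‖Polynomial.aeval (z - I * l) f‖ <
          ‖Polynomial.aeval (z + I * l) f‖ := by
        rw [haevf, haevf, Complex.norm_def, Complex.norm_def]
        apply Real.sqrt_lt_sqrt (Complex.normSq_nonneg _)
        rw [map_mul, map_mul]
        simp only [Complex.normSq_apply, Complex.sub_re, Complex.sub_im, Complex.add_re,
          Complex.add_im, Complex.mul_re, Complex.mul_im, Complex.I_re, Complex.I_im,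
          Complex.ofReal_re, Complex.ofReal_im, Complex.conj_re, Complex.conj_im]
        nlinarith [mul_pos (mul_pos hy hl)
          (show (0:ℝ) < z.im ^ 2 + l ^ 2 - r.im ^ 2 + (z.re - r.re) ^ 2 by
            nlinarith [sq_nonneg (z.re - r.re)]),
          sq_nonneg (z.re - r.re)]
      constructor
      · rw [hq]
        simp only [map_mul, norm_mul]
        exact mul_le_mul hquad.le hle (norm_nonneg _) (norm_nonneg _)
      · intro _
        rw [hq]
        simp only [map_mul, norm_mul]
        nlinarith [hquad, hle, hqpos, norm_nonneg (Polynomial.aeval (z - I * (l:ℂ)) f),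
          norm_nonneg (Polynomial.aeval (z - I * (l:ℂ)) q)]

theorem stmt_14 (p : Polynomial ℝ) (hp : 0 < p.degree)
    (δ l : ℝ) (hδ : 0 ≤ δ) (hl : 0 < l)
    (hroots : ∀ z : ℂ, Polynomial.aeval z p = 0 → |z.im| ≤ δ) :
    ∀ z : ℂ, Real.sqrt (max (δ ^ 2 - l ^ 2) 0) < z.im →
      ‖Polynomial.aeval (z - I * l) p‖ <
        ‖Polynomial.aeval (z + I * l) p‖ := by
  intro z hz
  have hM : (0:ℝ) ≤ max (δ ^ 2 - l ^ 2) 0 := le_max_right _ _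
  have hy : 0 < z.im := lt_of_le_of_lt (Real.sqrt_nonneg _) hz
  have h2 : δ ^ 2 - l ^ 2 < z.im ^ 2 := by
    have : max (δ ^ 2 - l ^ 2) 0 < z.im ^ 2 := by
      calc max (δ ^ 2 - l ^ 2) 0 = Real.sqrt (max (δ ^ 2 - l ^ 2) 0) ^ 2 := by
            rw [Real.sq_sqrt hM]
        _ < z.im ^ 2 := by
            apply pow_lt_pow_left₀ hz (Real.sqrt_nonneg _) (by norm_num)
    exact lt_of_le_of_lt (le_max_left _ _) this
  have hp0 : p ≠ 0 := fun h => by simp [h] at hp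
  have hnd : p.natDegree ≠ 0 := by
    intro h
    rw [Polynomial.degree_eq_natDegree hp0, h] at hp
    simp at hp
  exact (deBruijn_key l δ hl z hy h2 p.natDegree p le_rfl hp0 hroots).2 hnd
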